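/- arXiv:2212.00064 — 2 statements merged into one kernel-verified Lean document; each statement's English description precedes it below -/
import Mathlib

section
/- Let ρ : ℝ → ℝ be a smooth even function, decaying together with all its derivatives like a polynomial times e^{-|x|}, which satisfies −ρ'' + ρ − 5Q⁴ρ = (x²/4)Q on ℝ. Then ∫_ℝ ρ(x) Q(x) dx = (1/8) ∫_ℝ x² Q(x)² dx; in particular ∫_ℝ ρ Q > 0. -/
open scoped ContDiff
open Real MeasureTheory Filter Set Asymptotics Topology

/-- The ground state `Q(x) = 3^(1/4) (cosh 2x)^(-1/2)`, the positive even `H¹` solution of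
`-Q'' + Q = Q⁵` on `ℝ`. -/
noncomputable def Q (x : ℝ) : ℝ :=
  (3 : ℝ) ^ ((1 : ℝ) / 4) * Real.cosh (2 * x) ^ (-(1 : ℝ) / 2)


noncomputable def Qd (x : ℝ) : ℝ :=
  -((3 : ℝ) ^ ((1 : ℝ) / 4)) * Real.sinh (2 * x) * Real.cosh (2 * x) ^ (-(3 : ℝ) / 2)

lemma hasDerivAt_Q (x : ℝ) : HasDerivAt Q (Qd x) x := by
  have h2 : HasDerivAt (fun x : ℝ => 2 * x) 2 x := by
    simpa using (hasDerivAt_id x).const_mul 2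
  have hc : HasDerivAt (fun x : ℝ => Real.cosh (2 * x)) (2 * Real.sinh (2 * x)) x := by
    simpa [Function.comp_def, mul_comm] using (Real.hasDerivAt_cosh (2 * x)).comp x h2
  have hr : HasDerivAt (fun x : ℝ => Real.cosh (2 * x) ^ (-(1:ℝ)/2))
      ((2 * Real.sinh (2 * x)) * (-(1:ℝ)/2) * Real.cosh (2 * x) ^ ((-(1:ℝ)/2) - 1)) x :=
    hc.rpow_const (Or.inl (Real.cosh_pos (2*x)).ne')
  have := hr.const_mul ((3 : ℝ) ^ ((1 : ℝ) / 4))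
  refine this.congr_deriv ?_
  symm
  unfold Qd
  rw [show (-(1:ℝ)/2) - 1 = (-(3:ℝ)/2) by norm_num]
  ring

lemma hasDerivAt_Qd (x : ℝ) : HasDerivAt Qd (Q x - Q x ^ 5) x := by
  set c : ℝ := (3 : ℝ) ^ ((1 : ℝ) / 4) with hc
  have h2 : HasDerivAt (fun x : ℝ => 2 * x) 2 x := by simpa using (hasDerivAt_id x).const_mul 2
  have hs : HasDerivAt (fun x : ℝ => Real.sinh (2 * x)) (2 * Real.cosh (2 * x)) x := by
    simpa [Function.comp_def, mul_comm] using (Real.hasDerivAt_sinh (2 * x)).comp x h2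
  have hcsh : HasDerivAt (fun x : ℝ => Real.cosh (2 * x)) (2 * Real.sinh (2 * x)) x := by
    simpa [Function.comp_def, mul_comm] using (Real.hasDerivAt_cosh (2 * x)).comp x h2
  have hr : HasDerivAt (fun x : ℝ => Real.cosh (2 * x) ^ (-(3:ℝ)/2))
      ((2 * Real.sinh (2 * x)) * (-(3:ℝ)/2) * Real.cosh (2 * x) ^ ((-(3:ℝ)/2) - 1)) x :=
    hcsh.rpow_const (Or.inl (Real.cosh_pos (2*x)).ne')
  have hprod := (hs.mul hr).const_mul (-c)
  have heqQd : Qd = fun x => -c * (Real.sinh (2*x) * Real.cosh (2*x) ^ (-(3:ℝ)/2)) := by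
    funext y; unfold Qd; rw [← hc]; ring
  rw [heqQd]
  refine hprod.congr_deriv ?_
  symm
  set t := Real.cosh (2 * x) with ht
  have htpos : 0 < t := Real.cosh_pos (2 * x)
  set u := t ^ (-(1:ℝ)/2) with hu
  set s := Real.sinh (2 * x) with hsdef
  have hu3 : t ^ (-(3:ℝ)/2) = u ^ 3 := by
    rw [hu, ← Real.rpow_natCast (t ^ (-(1:ℝ)/2)) 3, ← Real.rpow_mul htpos.le]; norm_num
  have hu5 : t ^ ((-(3:ℝ)/2) - 1) = u ^ 5 := by
    rw [hu, ← Real.rpow_natCast (t ^ (-(1:ℝ)/2)) 5, ← Real.rpow_mul htpos.le]; norm_num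
  have hu1 : t * u ^ 2 = 1 := by
    rw [hu, ← Real.rpow_natCast (t ^ (-(1:ℝ)/2)) 2, ← Real.rpow_mul htpos.le]
    norm_num
    rw [Real.rpow_neg_one]
    field_simp
  have hsq : s ^ 2 = t ^ 2 - 1 := Real.sinh_sq (2*x)
  have hc5 : c ^ 5 = 3 * c := by
    rw [hc, ← Real.rpow_natCast ((3:ℝ) ^ ((1:ℝ)/4)) 5, ← Real.rpow_mul (by norm_num : (0:ℝ) ≤ 3)]
    rw [show ((1:ℝ)/4 * ((5:ℕ):ℝ) : ℝ) = 1 + 1/4 by push_cast; norm_num]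
    rw [Real.rpow_add (by norm_num : (0:ℝ) < 3), Real.rpow_one]
  have hQ : Q x = c * u := rfl
  rw [hQ, hu3, hu5]
  linear_combination (-(u^5)) * hc5 + (-3*c*u^5) * hsq + (-(c*u))*(3*t*u^2+1) * hu1

lemma tu2 (x : ℝ) : Real.cosh (2*x) * (Real.cosh (2*x) ^ (-(1:ℝ)/2))^2 = 1 := by
  have htpos : 0 < Real.cosh (2*x) := Real.cosh_pos (2*x)
  rw [← Real.rpow_natCast (Real.cosh (2*x) ^ (-(1:ℝ)/2)) 2, ← Real.rpow_mul htpos.le]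
  norm_num
  rw [Real.rpow_neg_one]
  field_simp

lemma Q_pos (x : ℝ) : 0 < Q x :=
  mul_pos (Real.rpow_pos_of_pos (by norm_num) _) (Real.rpow_pos_of_pos (Real.cosh_pos _) _)

lemma u_bound (x : ℝ) : Real.cosh (2*x) ^ (-(1:ℝ)/2) ≤ 2 * Real.exp (-|x|) := by
  set t := Real.cosh (2*x) with htdef
  have htpos : 0 < t := Real.cosh_pos (2*x)
  set u := t ^ (-(1:ℝ)/2) with hu
  have hupos : 0 < u := Real.rpow_pos_of_pos htpos _
  set E := Real.exp (-|x|) with hE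
  have hEpos : 0 < E := Real.exp_pos _
  have hu2 : t * u^2 = 1 := tu2 x
  have ht : Real.exp (2*|x|) / 2 ≤ t := by
    have h1 : t = Real.cosh |2*x| := (Real.cosh_abs _).symm
    have h2 : |2*x| = 2*|x| := by rw [abs_mul]; norm_num
    rw [h1, h2, Real.cosh_eq]
    have := (Real.exp_pos (-(2*|x|))).le
    linarith
  have hE2 : E^2 = Real.exp (-(2*|x|)) := by
    rw [hE, sq, ← Real.exp_add]; ring_nf
  have h1 : u^2 ≤ 2 * E^2 := by
    have hexp : 0 < Real.exp (2*|x|) := Real.exp_pos _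
    have h3 : u^2 = t⁻¹ := by
      field_simp at hu2 ⊢
      linarith [hu2]
    rw [h3, hE2, Real.exp_neg]
    have h4 : t⁻¹ ≤ (Real.exp (2*|x|) / 2)⁻¹ := by
      apply inv_anti₀ (by positivity) ht
    calc t⁻¹ ≤ (Real.exp (2*|x|) / 2)⁻¹ := h4
      _ = 2 * (Real.exp (2*|x|))⁻¹ := by field_simp
  nlinarith [sq_nonneg (u - 2*E)]

lemma Q_le (x : ℝ) : Q x ≤ 2 * (3:ℝ)^((1:ℝ)/4) * Real.exp (-|x|) := by
  have h := u_bound x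
  have hc : (0:ℝ) < (3:ℝ)^((1:ℝ)/4) := Real.rpow_pos_of_pos (by norm_num) _
  unfold Q
  calc (3:ℝ)^((1:ℝ)/4) * Real.cosh (2*x) ^ (-(1:ℝ)/2)
      ≤ (3:ℝ)^((1:ℝ)/4) * (2 * Real.exp (-|x|)) := by
        apply mul_le_mul_of_nonneg_left h hc.le
    _ = 2 * (3:ℝ)^((1:ℝ)/4) * Real.exp (-|x|) := by ring

lemma Qd_le (x : ℝ) : |Qd x| ≤ 2 * (3:ℝ)^((1:ℝ)/4) * Real.exp (-|x|) := by
  set c : ℝ := (3 : ℝ) ^ ((1 : ℝ) / 4) with hc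
  have hcpos : (0:ℝ) < c := Real.rpow_pos_of_pos (by norm_num) _
  set t := Real.cosh (2*x) with htdef
  have htpos : 0 < t := Real.cosh_pos (2*x)
  set u := t ^ (-(1:ℝ)/2) with hu
  have hupos : 0 < u := Real.rpow_pos_of_pos htpos _
  set s := Real.sinh (2*x) with hsdef
  have hu2 : t * u^2 = 1 := tu2 x
  have hu3 : t ^ (-(3:ℝ)/2) = u ^ 3 := by
    rw [hu, ← Real.rpow_natCast (t ^ (-(1:ℝ)/2)) 3, ← Real.rpow_mul htpos.le]; norm_num
  have hst : |s| ≤ t := by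
    have h1 : s^2 = t^2 - 1 := Real.sinh_sq (2*x)
    have h2 : |s|^2 = s^2 := sq_abs s
    nlinarith [abs_nonneg s]
  have hQd : |Qd x| = c * |s| * u^3 := by
    unfold Qd
    rw [← hc, ← hsdef, ← htdef, hu3, abs_mul, abs_mul]
    rw [abs_of_nonpos (by linarith : -c ≤ 0), abs_of_nonneg (by positivity : (0:ℝ) ≤ u^3)]
    ring
  have key : c * |s| * u^3 ≤ c * u := by
    have h3 : |s| * u^3 ≤ t * u^3 := by
      apply mul_le_mul_of_nonneg_right hst (by positivity)
    have h4 : t * u^3 = u := by nlinarith [hu2]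
    calc c * |s| * u^3 = c * (|s| * u^3) := by ring
      _ ≤ c * (t * u^3) := mul_le_mul_of_nonneg_left h3 hcpos.le
      _ = c * u := by rw [h4]
  have := u_bound x
  calc |Qd x| = c * |s| * u^3 := hQd
    _ ≤ c * u := key
    _ ≤ c * (2 * Real.exp (-|x|)) := mul_le_mul_of_nonneg_left (u_bound x) hcpos.le
    _ = 2 * c * Real.exp (-|x|) := by ring

lemma Q_le_c (x : ℝ) : Q x ≤ (3:ℝ)^((1:ℝ)/4) := by
  unfold Q
  have h1 : Real.cosh (2*x) ^ (-(1:ℝ)/2) ≤ 1 := by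
    apply Real.rpow_le_one_of_one_le_of_nonpos (Real.one_le_cosh _) (by norm_num)
  nlinarith [Real.rpow_pos_of_pos (show (0:ℝ)<3 by norm_num) ((1:ℝ)/4)]

lemma tendsto_poly_exp (C : ℝ) (n : ℕ) :
    Tendsto (fun x : ℝ => C * (1+x^2)^n * Real.exp (-x)) atTop (𝓝 0) := by
  have h := Polynomial.tendsto_div_exp_atTop ((Polynomial.C C) * (1 + Polynomial.X^2)^n)
  refine h.congr (fun x => ?_)
  simp [Real.exp_neg, div_eq_mul_inv]

lemma decay_tendsto (f : ℝ → ℝ) (C : ℝ) (n : ℕ)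
    (h : ∀ x, |f x| ≤ C * (1+x^2)^n * Real.exp (-|x|)) :
    Tendsto f atTop (𝓝 0) ∧ Tendsto f atBot (𝓝 0) := by
  have hTop : ∀ g : ℝ → ℝ, (∀ x, |g x| ≤ C * (1+x^2)^n * Real.exp (-|x|)) →
      Tendsto g atTop (𝓝 0) := by
    intro g hg
    apply squeeze_zero_norm' ?_ (tendsto_poly_exp C n)
    filter_upwards [eventually_ge_atTop (0:ℝ)] with x hx
    simpa [Real.norm_eq_abs, abs_of_nonneg hx] using hg x
  refine ⟨hTop f h, ?_⟩
  have h1 : Tendsto (fun x => f (-x)) atTop (𝓝 0) := by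
    apply hTop
    intro x
    simpa using h (-x)
  have h2 : Tendsto (fun x : ℝ => f (-(-x))) atBot (𝓝 0) := h1.comp tendsto_neg_atBot_atTop
  simpa using h2

lemma decay_integrable (f : ℝ → ℝ) (hf : Continuous f) (C : ℝ) (n : ℕ)
    (h : ∀ x, |f x| ≤ C * (1+x^2)^n * Real.exp (-(2:ℝ)*|x|)) :
    Integrable f := by
  set B : ℝ → ℝ := fun x => C * (1+x^2)^n * Real.exp (-(2:ℝ)*|x|) with hB
  have hfB : f =O[⊤] B := by
    apply Asymptotics.isBigO_of_le
    intro x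
    have h2 := h x
    have h3 : 0 ≤ B x := le_trans (abs_nonneg _) h2
    show ‖f x‖ ≤ ‖B x‖
    rw [Real.norm_eq_abs, Real.norm_eq_abs, abs_of_nonneg h3]
    exact h2
  have hBtop : B =o[atTop] (fun x => Real.exp (-x)) := by
    rw [Asymptotics.isLittleO_iff_tendsto (fun x hx => absurd hx (Real.exp_ne_zero _))]
    have heq : ∀ᶠ x in atTop, C * (1+x^2)^n * Real.exp (-x)
        = B x / Real.exp (-x) := by
      filter_upwards [eventually_ge_atTop (0:ℝ)] with x hx
      rw [hB]
      simp only [abs_of_nonneg hx]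
      rw [mul_div_assoc, ← Real.exp_sub]
      congr 1
      ring
    exact (tendsto_poly_exp C n).congr' heq
  have hBbot : B =o[atBot] (fun x => Real.exp x) := by
    rw [Asymptotics.isLittleO_iff_tendsto (fun x hx => absurd hx (Real.exp_ne_zero _))]
    have h1 : Tendsto (fun x : ℝ => C * (1+x^2)^n * Real.exp x) atBot (𝓝 0) := by
      have := (tendsto_poly_exp C n).comp tendsto_neg_atBot_atTop
      simpa [Function.comp_def] using this
    have heq : ∀ᶠ x in atBot, C * (1+x^2)^n * Real.exp x = B x / Real.exp x := by
      filter_upwards [eventually_le_atBot (0:ℝ)] with x hx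
      rw [hB]
      simp only [abs_of_nonpos hx]
      rw [mul_div_assoc, ← Real.exp_sub]
      congr 1
      ring
    exact h1.congr' heq
  exact hf.locallyIntegrable.integrable_of_isBigO_atBot_atTop
    ((hfB.mono le_top).trans hBbot.isBigO) ⟨Iic 0, Iic_mem_atBot 0, integrableOn_exp_Iic 0⟩
    ((hfB.mono le_top).trans hBtop.isBigO)
    ⟨Ioi 0, Ioi_mem_atTop 0, by simpa using exp_neg_integrableOn_Ioi 0 one_pos⟩

noncomputable def Wf (x : ℝ) : ℝ := Q x / 2 + x * Qd x
noncomputable def Wf1 (x : ℝ) : ℝ := 3/2 * Qd x + x * (Q x - Q x ^ 5)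

lemma hasDerivAt_Wf (x : ℝ) : HasDerivAt Wf (Wf1 x) x := by
  have h := ((hasDerivAt_Q x).div_const 2).add ((hasDerivAt_id x).mul (hasDerivAt_Qd x))
  have heq : Wf = fun x => Q x / 2 + x * Qd x := rfl
  rw [heq]
  refine h.congr_deriv ?_
  symm
  unfold Wf1
  simp only [id_eq, one_mul]
  ring

lemma hasDerivAt_Wf1 (x : ℝ) :
    HasDerivAt Wf1 (5/2*(Q x - Q x^5) + x * (Qd x - 5 * Q x^4 * Qd x)) x := by
  have hQ5 : HasDerivAt (fun x => Q x ^ 5) (5 * Q x^4 * Qd x) x := by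
    simpa using (hasDerivAt_Q x).fun_pow 5
  have h := ((hasDerivAt_Qd x).const_mul (3/2:ℝ)).add
    ((hasDerivAt_id x).mul ((hasDerivAt_Q x).sub hQ5))
  have heq : Wf1 = fun x => 3/2 * Qd x + x * (Q x - Q x ^ 5) := rfl
  rw [heq]
  refine h.congr_deriv ?_
  symm
  simp only [id_eq, one_mul, Pi.sub_apply]
  ring

lemma Q4_le (x : ℝ) : Q x ^ 4 ≤ 3 := by
  have h1 : Q x ^ 4 ≤ ((3:ℝ)^((1:ℝ)/4)) ^ 4 :=
    pow_le_pow_left₀ (Q_pos x).le (Q_le_c x) 4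
  have h2 : ((3:ℝ)^((1:ℝ)/4)) ^ 4 = 3 := by
    rw [← Real.rpow_natCast ((3:ℝ)^((1:ℝ)/4)) 4, ← Real.rpow_mul (by norm_num : (0:ℝ) ≤ 3)]
    norm_num
  linarith

lemma Wf_le (x : ℝ) : |Wf x| ≤ 2*(3:ℝ)^((1:ℝ)/4) * (1+x^2) * Real.exp (-|x|) := by
  set c : ℝ := (3 : ℝ) ^ ((1 : ℝ) / 4) with hc
  set E := Real.exp (-|x|) with hEdef
  have hE : 0 < E := Real.exp_pos _
  have h1 : |Wf x| ≤ |Q x|/2 + |x| * |Qd x| := by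
    unfold Wf
    calc |Q x / 2 + x * Qd x| ≤ |Q x / 2| + |x * Qd x| := abs_add_le _ _
      _ = |Q x|/2 + |x| * |Qd x| := by rw [abs_div, abs_mul]; norm_num
  have h2 : |Q x| = Q x := abs_of_pos (Q_pos x)
  have hQb := Q_le x
  have hQdb := Qd_le x
  have h3 : |x| * |Qd x| ≤ |x| * (2*c*E) := mul_le_mul_of_nonneg_left hQdb (abs_nonneg x)
  have h4 : |x| ≤ 1 + x^2 := by nlinarith [sq_abs x, sq_nonneg (|x| - 1)]
  have h5 : (1:ℝ)/2 + |x| ≤ 1 + x^2 := by nlinarith [sq_abs x, sq_nonneg (|x| - 1)]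
  have hcpos : (0:ℝ) < c := Real.rpow_pos_of_pos (by norm_num) _
  calc |Wf x| ≤ |Q x|/2 + |x| * |Qd x| := h1
    _ ≤ (2*c*E)/2 + |x| * (2*c*E) := by rw [h2]; gcongr
    _ = (2*c*E) * (1/2 + |x|) := by ring
    _ ≤ (2*c*E) * (1 + x^2) := by
        apply mul_le_mul_of_nonneg_left h5 (by positivity)
    _ = 2*c*(1+x^2)*E := by ring

lemma Wf1_le (x : ℝ) : |Wf1 x| ≤ 8*(3:ℝ)^((1:ℝ)/4) * (1+x^2) * Real.exp (-|x|) := by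
  set c : ℝ := (3 : ℝ) ^ ((1 : ℝ) / 4) with hc
  set E := Real.exp (-|x|) with hEdef
  have hE : 0 < E := Real.exp_pos _
  have hcpos : (0:ℝ) < c := Real.rpow_pos_of_pos (by norm_num) _
  have hQb := Q_le x
  have hQdb := Qd_le x
  have hQpos := Q_pos x
  have hQ5 : Q x ^ 5 ≤ 3 * Q x := by nlinarith [Q4_le x]
  have h1 : |Wf1 x| ≤ 3/2 * |Qd x| + |x| * (Q x + Q x^5) := by
    unfold Wf1
    calc |3/2 * Qd x + x * (Q x - Q x ^ 5)| ≤ |3/2 * Qd x| + |x * (Q x - Q x^5)| := abs_add_le _ _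
      _ = 3/2 * |Qd x| + |x| * |Q x - Q x^5| := by rw [abs_mul, abs_mul]; norm_num
      _ ≤ 3/2 * |Qd x| + |x| * (Q x + Q x^5) := by
          gcongr
          refine (abs_sub _ _).trans ?_
          rw [abs_of_pos hQpos, abs_of_pos (by positivity)]
  have h2 : Q x + Q x^5 ≤ 4 * Q x := by linarith
  have h3 : Q x ≤ 2*c*E := hQb
  have h4 : (3:ℝ)/2 + 4 * |x| ≤ 4*(1+x^2) := by nlinarith [sq_abs x, sq_nonneg (|x| - 1)]
  calc |Wf1 x| ≤ 3/2 * |Qd x| + |x| * (Q x + Q x^5) := h1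
    _ ≤ 3/2 * (2*c*E) + |x| * (4 * (2*c*E)) := by
        gcongr
        calc Q x + Q x^5 ≤ 4 * Q x := h2
          _ ≤ 4 * (2*c*E) := by linarith
    _ = (2*c*E) * (3/2 + 4 * |x|) := by ring
    _ ≤ (2*c*E) * (4*(1+x^2)) := mul_le_mul_of_nonneg_left h4 (by positivity)
    _ = 8*c*(1+x^2)*E := by ring

/-- If `ρ` is a smooth even function decaying, together with all its derivatives, like a
polynomial times `e^{-|x|}`, and `L₊ρ = (x²/4)Q` (i.e. `−ρ'' + ρ − 5Q⁴ρ = (x²/4)Q`),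
then `∫ρQ = (1/8)∫x²Q²`; in particular `∫ρQ > 0`. -/
theorem rho_Q_inner_product (ρ : ℝ → ℝ) (hsm : ContDiff ℝ ∞ ρ)
    (heven : ∀ x, ρ (-x) = ρ x)
    (hdecay : ∃ q : ℕ, ∀ p : ℕ, ∃ C : ℝ, 0 < C ∧ ∀ x : ℝ,
      |iteratedDeriv p ρ x| ≤ C * (1 + x ^ 2) ^ ((q : ℝ) / 2) * Real.exp (-|x|))
    (heq : ∀ x : ℝ, -(deriv (deriv ρ) x) + ρ x - 5 * (Q x) ^ 4 * ρ x = x ^ 2 / 4 * Q x) :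
    (∫ x : ℝ, ρ x * Q x) = (1 / 8 : ℝ) * (∫ x : ℝ, x ^ 2 * (Q x) ^ 2) ∧
      0 < ∫ x : ℝ, ρ x * Q x := by
  obtain ⟨q, hq⟩ := hdecay
  obtain ⟨C0, hC0pos, hC0⟩ := hq 0
  obtain ⟨C1, hC1pos, hC1⟩ := hq 1
  set c : ℝ := (3 : ℝ) ^ ((1 : ℝ) / 4) with hc
  have hcpos : (0:ℝ) < c := Real.rpow_pos_of_pos (by norm_num) _
  have hpow : ∀ x : ℝ, (1+x^2:ℝ) ^ ((q:ℝ)/2) ≤ (1+x^2)^q := by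
    intro x
    have h1 : (1:ℝ) ≤ 1+x^2 := by nlinarith [sq_nonneg x]
    calc (1+x^2:ℝ)^((q:ℝ)/2) ≤ (1+x^2)^((q:ℝ)) := by
          apply Real.rpow_le_rpow_of_exponent_le h1
          have : (0:ℝ) ≤ (q:ℝ) := Nat.cast_nonneg q
          linarith
      _ = (1+x^2)^q := Real.rpow_natCast _ q
  have hρ0 : ∀ x, |ρ x| ≤ C0 * (1+x^2)^q * Real.exp (-|x|) := by
    intro x
    have h := hC0 x
    rw [iteratedDeriv_zero] at h
    refine h.trans ?_
    exact mul_le_mul_of_nonneg_right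
      (mul_le_mul_of_nonneg_left (hpow x) hC0pos.le) (Real.exp_pos _).le
  have hρ1 : ∀ x, |deriv ρ x| ≤ C1 * (1+x^2)^q * Real.exp (-|x|) := by
    intro x
    have h := hC1 x
    rw [iteratedDeriv_one] at h
    refine h.trans ?_
    exact mul_le_mul_of_nonneg_right
      (mul_le_mul_of_nonneg_left (hpow x) hC1pos.le) (Real.exp_pos _).le
  have hone : (1 : WithTop ℕ∞) ≤ ∞ := by exact_mod_cast le_top
  have hρdiff : ∀ x, HasDerivAt ρ (deriv ρ x) x := fun x =>
    ((hsm.differentiable (by simp)) x).hasDerivAt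
  have hsm' : ContDiff ℝ ∞ (deriv ρ) := (contDiff_infty_iff_deriv.mp hsm).2
  have hρdiff2 : ∀ x, HasDerivAt (deriv ρ) (deriv (deriv ρ) x) x := fun x =>
    ((hsm'.differentiable (by simp)) x).hasDerivAt
  have hρc : Continuous ρ := hsm.continuous
  have hQc : Continuous Q := by
    have h : Differentiable ℝ Q := fun x => (hasDerivAt_Q x).differentiableAt
    exact h.continuous
  -- auxiliary functions
  have hgd : ∀ x, HasDerivAt (fun x => deriv ρ x * Wf x - ρ x * Wf1 x + (1/8)*x^3*(Q x)^2)
      (1/4*(x^2*(Q x)^2) - 2*(ρ x * Q x)) x := by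
    intro x
    have h1 : HasDerivAt (fun x : ℝ => (1/8:ℝ)*x^3) (1/8*(3*x^2)) x := by
      simpa using (hasDerivAt_pow 3 x).const_mul (1/8:ℝ)
    have h2 : HasDerivAt (fun x => (Q x)^2) (2*Q x*Qd x) x := by
      simpa using (hasDerivAt_Q x).fun_pow 2
    have hcube := h1.mul h2
    have h := (((hρdiff2 x).mul (hasDerivAt_Wf x)).sub
      ((hρdiff x).mul (hasDerivAt_Wf1 x))).add hcube
    refine h.congr_deriv ?_
    symm
    have he := heq x
    unfold Wf Wf1
    linear_combination (Q x/2 + x*Qd x) * he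
  -- integrability
  have hint1 : Integrable (fun x : ℝ => x^2*(Q x)^2) := by
    apply decay_integrable _ ((continuous_pow 2).mul (hQc.pow 2)) ((2*c)^2) 1
    intro x
    set E := Real.exp (-|x|) with hEdef
    have hE : 0 < E := Real.exp_pos _
    have hE2 : Real.exp (-(2:ℝ)*|x|) = E * E := by
      rw [hEdef, ← Real.exp_add]; ring_nf
    have h1 : (Q x)^2 ≤ (2*c*E)^2 := pow_le_pow_left₀ (Q_pos x).le (Q_le x) 2
    calc |x^2*(Q x)^2| = x^2*(Q x)^2 := abs_of_nonneg (by positivity)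
      _ ≤ x^2 * (2*c*E)^2 := mul_le_mul_of_nonneg_left h1 (sq_nonneg x)
      _ = (2*c)^2 * x^2 * (E*E) := by ring
      _ ≤ (2*c)^2 * (1+x^2) * (E*E) := by gcongr; nlinarith [sq_nonneg x]
      _ = (2*c)^2 * (1+x^2)^1 * Real.exp (-(2:ℝ)*|x|) := by rw [hE2]; ring
  have hint2 : Integrable (fun x : ℝ => ρ x * Q x) := by
    apply decay_integrable _ (hρc.mul hQc) (C0*(2*c)) q
    intro x
    set E := Real.exp (-|x|) with hEdef
    have hE : 0 < E := Real.exp_pos _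
    have hE2 : Real.exp (-(2:ℝ)*|x|) = E * E := by
      rw [hEdef, ← Real.exp_add]; ring_nf
    have h1 : |ρ x * Q x| = |ρ x| * Q x := by
      rw [abs_mul, abs_of_pos (Q_pos x)]
    calc |ρ x * Q x| = |ρ x| * Q x := h1
      _ ≤ (C0 * (1+x^2)^q * E) * (2*c*E) :=
          mul_le_mul (hρ0 x) (Q_le x) (Q_pos x).le (by positivity)
      _ = C0*(2*c) * (1+x^2)^q * Real.exp (-(2:ℝ)*|x|) := by rw [hE2]; ring
  have hφint : Integrable (fun x : ℝ => 1/4*(x^2*(Q x)^2) - 2*(ρ x * Q x)) :=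
    (hint1.const_mul (1/4)).sub (hint2.const_mul 2)
  -- bound on g
  set K : ℝ := C1*(2*c) + C0*(8*c) + (2*c)^2 with hK
  have hgb : ∀ x, |deriv ρ x * Wf x - ρ x * Wf1 x + (1/8)*x^3*(Q x)^2|
      ≤ K * (1+x^2)^(q+2) * Real.exp (-|x|) := by
    intro x
    set E := Real.exp (-|x|) with hEdef
    have hE : 0 < E := Real.exp_pos _
    have hE1 : E ≤ 1 := Real.exp_le_one_iff.mpr (neg_nonpos.mpr (abs_nonneg x))
    have hP1 : (1:ℝ) ≤ 1+x^2 := by nlinarith [sq_nonneg x]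
    have hP0 : (0:ℝ) < 1+x^2 := by nlinarith [sq_nonneg x]
    set B : ℝ := (1+x^2)^(q+2) * E with hB
    have hBpos : 0 < B := by positivity
    have hq1 : (1+x^2:ℝ)^(q+1) ≤ (1+x^2)^(q+2) := pow_le_pow_right₀ hP1 (by omega)
    have hq2 : (1+x^2:ℝ)^2 ≤ (1+x^2)^(q+2) := pow_le_pow_right₀ hP1 (by omega)
    have b1 : |deriv ρ x * Wf x| ≤ (C1*(2*c)) * B := by
      rw [abs_mul]
      calc |deriv ρ x| * |Wf x| ≤ (C1 * (1+x^2)^q * E) * (2*c*(1+x^2)*E) :=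
            mul_le_mul (hρ1 x) (Wf_le x) (abs_nonneg _) (by positivity)
        _ = (C1*(2*c)) * ((1+x^2)^(q+1) * E) * E := by ring
        _ ≤ (C1*(2*c)) * ((1+x^2)^(q+2) * E) * 1 := by
            apply mul_le_mul _ hE1 hE.le (by positivity)
            apply mul_le_mul_of_nonneg_left _ (by positivity)
            exact mul_le_mul_of_nonneg_right hq1 hE.le
        _ = (C1*(2*c)) * B := by rw [hB]; ring
    have b2 : |ρ x * Wf1 x| ≤ (C0*(8*c)) * B := by
      rw [abs_mul]
      calc |ρ x| * |Wf1 x| ≤ (C0 * (1+x^2)^q * E) * (8*c*(1+x^2)*E) :=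
            mul_le_mul (hρ0 x) (Wf1_le x) (abs_nonneg _) (by positivity)
        _ = (C0*(8*c)) * ((1+x^2)^(q+1) * E) * E := by ring
        _ ≤ (C0*(8*c)) * ((1+x^2)^(q+2) * E) * 1 := by
            apply mul_le_mul _ hE1 hE.le (by positivity)
            apply mul_le_mul_of_nonneg_left _ (by positivity)
            exact mul_le_mul_of_nonneg_right hq1 hE.le
        _ = (C0*(8*c)) * B := by rw [hB]; ring
    have b3 : |(1/8)*x^3*(Q x)^2| ≤ (2*c)^2 * B := by
      have h1 : |(1/8)*x^3*(Q x)^2| = 1/8*|x|^3*(Q x)^2 := by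
        rw [abs_mul, abs_mul, abs_pow, abs_of_nonneg (sq_nonneg (Q x))]
        norm_num
      have h2 : (Q x)^2 ≤ (2*c*E)^2 := pow_le_pow_left₀ (Q_pos x).le (Q_le x) 2
      have h3 : (1:ℝ)/8*|x|^3 ≤ (1+x^2)^2 := by
        nlinarith [sq_abs x, abs_nonneg x, sq_nonneg (|x| - 1), sq_nonneg (|x|^2 - |x|)]
      calc |(1/8)*x^3*(Q x)^2| = 1/8*|x|^3*(Q x)^2 := h1
        _ ≤ 1/8*|x|^3*(2*c*E)^2 := by
            apply mul_le_mul_of_nonneg_left h2 (by positivity)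
        _ = (2*c)^2 * (1/8*|x|^3) * (E*E) := by ring
        _ ≤ (2*c)^2 * (1+x^2)^2 * (E*1) := by
            apply mul_le_mul _ _ (by positivity) (by positivity)
            · exact mul_le_mul_of_nonneg_left h3 (by positivity)
            · exact mul_le_mul_of_nonneg_left hE1 hE.le
        _ ≤ (2*c)^2 * (1+x^2)^(q+2) * (E*1) := by
            apply mul_le_mul_of_nonneg_right _ (by positivity)
            exact mul_le_mul_of_nonneg_left hq2 (by positivity)
        _ = (2*c)^2 * B := by rw [hB]; ring
    calc |deriv ρ x * Wf x - ρ x * Wf1 x + (1/8)*x^3*(Q x)^2|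
        ≤ |deriv ρ x * Wf x - ρ x * Wf1 x| + |(1/8)*x^3*(Q x)^2| := abs_add_le _ _
      _ ≤ (|deriv ρ x * Wf x| + |ρ x * Wf1 x|) + |(1/8)*x^3*(Q x)^2| := by
          gcongr
          exact abs_sub _ _
      _ ≤ ((C1*(2*c)) * B + (C0*(8*c)) * B) + (2*c)^2 * B := by gcongr
      _ = K * (1+x^2)^(q+2) * E := by rw [hK, hB]; ring
  obtain ⟨hgtop, hgbot⟩ := decay_tendsto _ K (q+2) hgb
  have hIoi : ∫ x in Ioi (0:ℝ), (1/4*(x^2*(Q x)^2) - 2*(ρ x * Q x))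
      = 0 - (deriv ρ 0 * Wf 0 - ρ 0 * Wf1 0 + (1/8)*(0:ℝ)^3*(Q 0)^2) :=
    integral_Ioi_of_hasDerivAt_of_tendsto' (fun x _ => hgd x) hφint.integrableOn hgtop
  have hIic : ∫ x in Iic (0:ℝ), (1/4*(x^2*(Q x)^2) - 2*(ρ x * Q x))
      = (deriv ρ 0 * Wf 0 - ρ 0 * Wf1 0 + (1/8)*(0:ℝ)^3*(Q 0)^2) - 0 :=
    integral_Iic_of_hasDerivAt_of_tendsto' (fun x _ => hgd x) hφint.integrableOn hgbot
  have htot : ∫ x : ℝ, (1/4*(x^2*(Q x)^2) - 2*(ρ x * Q x)) = 0 := by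
    rw [← intervalIntegral.integral_Iic_add_Ioi (b := (0:ℝ)) hφint.integrableOn hφint.integrableOn,
      hIoi, hIic]
    ring
  have hsplit : ∫ x : ℝ, (1/4*(x^2*(Q x)^2) - 2*(ρ x * Q x))
      = 1/4*(∫ x : ℝ, x^2*(Q x)^2) - 2*(∫ x : ℝ, ρ x * Q x) := by
    rw [integral_sub (hint1.const_mul (1/4)) (hint2.const_mul 2),
      integral_const_mul, integral_const_mul]
  have hmain : (∫ x : ℝ, ρ x * Q x) = (1/8 : ℝ) * ∫ x : ℝ, x^2*(Q x)^2 := by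
    rw [hsplit] at htot
    linarith
  have hApos : 0 < ∫ x : ℝ, x^2*(Q x)^2 := by
    rw [integral_pos_iff_support_of_nonneg (fun x => by positivity) hint1]
    have hsub : Ioi (0:ℝ) ⊆ Function.support (fun x : ℝ => x^2*(Q x)^2) := by
      intro x hx
      have hx0 : (0:ℝ) < x := hx
      have : (0:ℝ) < x^2*(Q x)^2 := by
        have := Q_pos x
        positivity
      exact this.ne'
    calc (0:ENNReal) < volume (Ioi (0:ℝ)) := by rw [Real.volume_Ioi]; exact ENNReal.zero_lt_top
      _ ≤ volume (Function.support (fun x : ℝ => x^2*(Q x)^2)) := measure_mono hsub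
  exact ⟨hmain, by rw [hmain]; linarith⟩
end

section
/- Let m > 0, and let P₁, P₂, P₃, P₄ : ℝ → ℝ be continuous functions such that there exist C > 0 and δ > 0 with |P_j(x)| ≤ C e^{−(2m+δ)x} for all x ≥ 0 and j = 1,2,3,4. If u, v ∈ C²(ℝ, ℝ) satisfy −u'' + m²u + P₁u + P₂v = 0 and −v'' + P₃u + P₄v = 0 on ℝ, then there exist constants c, d₀, d₁ ∈ ℝ and C' > 0 such that for all x ≥ 0: |u(x) − c e^{mx}| ≤ C' e^{−mx} and |v(x) − d₀ − d₁x| ≤ C' e^{−mx}. -/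
open Real MeasureTheory Set intervalIntegral Filter

namespace OdeAsymAux

lemma integral_exp_mul' (β : ℝ) (hβ : β ≠ 0) (x : ℝ) :
    ∫ s in (0:ℝ)..x, Real.exp (β * s) = (Real.exp (β * x) - 1) / β := by
  have h : ∀ s ∈ Set.uIcc (0:ℝ) x, HasDerivAt (fun t => Real.exp (β * t) / β) (Real.exp (β * s)) s := by
    intro s _
    have := ((hasDerivAt_id s).const_mul β).exp.div_const β
    simpa [mul_comm, mul_div_assoc, mul_div_cancel_left₀ _ hβ] using this
  have := intervalIntegral.integral_eq_sub_of_hasDerivAt h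
    ((Real.continuous_exp.comp (continuous_const.mul continuous_id)).intervalIntegrable 0 x)
  simp at this
  rw [this]; ring

lemma interval_bound {h : ℝ → ℝ} (hc : Continuous h) {A β x : ℝ} (hA : 0 ≤ A) (hβ : β ≠ 0)
    (hx : 0 ≤ x) (hb : ∀ s, 0 ≤ s → |h s| ≤ A * Real.exp (β * s)) :
    |∫ s in (0:ℝ)..x, h s| ≤ A * ((Real.exp (β * x) - 1) / β) := by
  have h1 : |∫ s in (0:ℝ)..x, h s| ≤ |∫ s in (0:ℝ)..x, A * Real.exp (β * s)| := by
    rw [← Real.norm_eq_abs]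
    apply intervalIntegral.norm_integral_le_abs_of_norm_le
    · refine (ae_restrict_iff' measurableSet_uIoc).2 (ae_of_all _ fun s hs => ?_)
      rcases uIoc_of_le hx ▸ hs with ⟨h0, _⟩
      simpa using hb s h0.le
    · exact Continuous.intervalIntegrable (by continuity) 0 x
  have h2 : |∫ s in (0:ℝ)..x, A * Real.exp (β * s)| = ∫ s in (0:ℝ)..x, A * Real.exp (β * s) := by
    apply abs_of_nonneg
    exact intervalIntegral.integral_nonneg hx fun s _ => mul_nonneg hA (Real.exp_pos _).le
  rw [h2] at h1
  calc |∫ s in (0:ℝ)..x, h s| ≤ ∫ s in (0:ℝ)..x, A * Real.exp (β * s) := h1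
    _ = A * ((Real.exp (β * x) - 1) / β) := by
        rw [intervalIntegral.integral_const_mul, integral_exp_mul' β hβ]

lemma tail_exp (ν : ℝ) (hν : 0 < ν) (x : ℝ) :
    ∫ s in Ioi x, Real.exp (-(ν * s)) = Real.exp (-(ν * x)) / ν := by
  have hd : ∀ s ∈ Ioi x, HasDerivAt (fun t => -Real.exp (-(ν * t)) / ν) (Real.exp (-(ν * s))) s := by
    intro s _
    have := (((hasDerivAt_id s).const_mul ν).neg.exp).neg.div_const ν
    simpa [mul_comm, mul_div_assoc, mul_div_cancel_left₀ _ hν.ne'] using this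
  have hcont : ContinuousWithinAt (fun t => -Real.exp (-(ν * t)) / ν) (Ici x) x :=
    Continuous.continuousWithinAt (by continuity)
  have hint : IntegrableOn (fun s => Real.exp (-(ν * s))) (Ioi x) := by
    simpa [neg_mul] using exp_neg_integrableOn_Ioi x hν
  have hlim : Tendsto (fun t => -Real.exp (-(ν * t)) / ν) atTop (nhds 0) := by
    have h0 : Tendsto (fun t => Real.exp (-ν * t)) atTop (nhds 0) :=
      Real.tendsto_exp_atBot.comp (tendsto_id.const_mul_atTop_of_neg (neg_neg_iff_pos.2 hν))
    rw [show (fun t => -Real.exp (-(ν * t)) / ν) = fun t => -Real.exp (-ν * t) / ν by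
      funext t; rw [neg_mul]]
    simpa using (h0.neg).div_const ν
  have := MeasureTheory.integral_Ioi_of_hasDerivAt_of_tendsto hcont hd hint hlim
  rw [this]; ring

lemma integrable_tail {h : ℝ → ℝ} (hc : Continuous h) {A ν : ℝ} (hν : 0 < ν)
    (hb : ∀ s, 0 ≤ s → |h s| ≤ A * Real.exp (-(ν * s))) {x : ℝ} (hx : 0 ≤ x) :
    IntegrableOn h (Ioi x) := by
  apply Integrable.mono' ((exp_neg_integrableOn_Ioi x hν).const_mul A)
  · exact hc.aestronglyMeasurable.restrict
  · refine (ae_restrict_iff' measurableSet_Ioi).2 (ae_of_all _ fun s hs => ?_)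
    have := hb s (hx.trans (le_of_lt hs))
    simpa [neg_mul] using this

lemma tail_bound {h : ℝ → ℝ} (hc : Continuous h) {A ν : ℝ} (hν : 0 < ν)
    (hb : ∀ s, 0 ≤ s → |h s| ≤ A * Real.exp (-(ν * s))) {x : ℝ} (hx : 0 ≤ x) :
    |∫ s in Ioi x, h s| ≤ A * Real.exp (-(ν * x)) / ν := by
  have key : ‖∫ s in Ioi x, h s‖ ≤ ∫ s in Ioi x, A * Real.exp (-(ν * s)) := by
    apply MeasureTheory.norm_integral_le_of_norm_le
      ((exp_neg_integrableOn_Ioi x hν).const_mul A |>.congr ?_)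
    · refine (ae_restrict_iff' measurableSet_Ioi).2 (ae_of_all _ fun s hs => ?_)
      simpa using hb s (hx.trans (le_of_lt hs))
    · exact ae_of_all _ fun s => by simp [neg_mul]
  rw [Real.norm_eq_abs] at key
  calc |∫ s in Ioi x, h s| ≤ ∫ s in Ioi x, A * Real.exp (-(ν * s)) := key
    _ = A * (Real.exp (-(ν * x)) / ν) := by
        rw [MeasureTheory.integral_const_mul, tail_exp ν hν x]
    _ = A * Real.exp (-(ν * x)) / ν := by ring

lemma Ioi_split {h : ℝ → ℝ} (hc : Continuous h) {A ν : ℝ} (hν : 0 < ν)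
    (hb : ∀ s, 0 ≤ s → |h s| ≤ A * Real.exp (-(ν * s))) {x : ℝ} (hx : 0 ≤ x) :
    (∫ s in (0:ℝ)..x, h s) = (∫ s in Ioi (0:ℝ), h s) - ∫ s in Ioi x, h s := by
  have h1 : IntegrableOn h (Ioi (0:ℝ)) := integrable_tail hc hν hb le_rfl
  have h2 : IntegrableOn h (Ioi x) := integrable_tail hc hν hb hx
  have hIoc : IntegrableOn h (Ioc 0 x) := h1.mono_set Ioc_subset_Ioi_self
  have hsplit : (∫ s in Ioi (0:ℝ), h s) = (∫ s in Ioc 0 x, h s) + ∫ s in Ioi x, h s := by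
    rw [← MeasureTheory.setIntegral_union (Ioc_disjoint_Ioi le_rfl) measurableSet_Ioi hIoc h2,
      Ioc_union_Ioi_eq_Ioi hx]
  rw [intervalIntegral.integral_of_le hx, hsplit]
  ring

lemma key_identity (k : ℝ) (w : ℝ → ℝ) (hw1 : Differentiable ℝ w)
    (hw2 : Differentiable ℝ (deriv w)) (F : ℝ → ℝ) (hF : Continuous F)
    (heq : ∀ x, deriv (deriv w) x = k ^ 2 * w x + F x) (x : ℝ) :
    Real.exp (-(k * x)) * (deriv w x + k * w x) =
      (deriv w 0 + k * w 0) + ∫ s in (0:ℝ)..x, Real.exp (-(k * s)) * F s := by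
  set a : ℝ → ℝ := fun t => Real.exp (-(k * t)) * (deriv w t + k * w t) with ha
  have hd : ∀ s ∈ Set.uIcc (0:ℝ) x, HasDerivAt a (Real.exp (-(k * s)) * F s) s := by
    intro s _
    have h1 : HasDerivAt (fun t => Real.exp (-(k * t))) (-k * Real.exp (-(k * s))) s := by
      have := (((hasDerivAt_id s).const_mul k).neg).exp
      simpa [mul_comm] using this
    have h2 : HasDerivAt (fun t => deriv w t + k * w t)
        (deriv (deriv w) s + k * deriv w s) s :=
      ((hw2 s).hasDerivAt).add (((hw1 s).hasDerivAt).const_mul k)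
    have := h1.fun_mul h2
    exact this.congr_deriv (by rw [heq s]; ring)
  have hFc : Continuous fun s => Real.exp (-(k * s)) * F s := by continuity
  have := intervalIntegral.integral_eq_sub_of_hasDerivAt hd (hFc.intervalIntegrable 0 x)
  have ha0 : a 0 = deriv w 0 + k * w 0 := by simp [ha]
  rw [this, ha0]; ring

lemma ftc (z : ℝ → ℝ) (hz : Differentiable ℝ z) (hz' : Continuous (deriv z)) (x : ℝ) :
    z x = z 0 + ∫ s in (0:ℝ)..x, deriv z s := by
  have := intervalIntegral.integral_eq_sub_of_hasDerivAt
    (f := z) (f' := deriv z) (a := (0:ℝ)) (b := x)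
    (fun s _ => (hz s).hasDerivAt) (hz'.intervalIntegrable 0 x)
  rw [this]; ring

lemma exp_rate_mono {r r' x : ℝ} (h : r ≤ r') (hx : 0 ≤ x) :
    Real.exp (r * x) ≤ Real.exp (r' * x) :=
  Real.exp_le_exp.2 (mul_le_mul_of_nonneg_right h hx)

lemma one_le_exp_rate {r x : ℝ} (hr : 0 ≤ r) (hx : 0 ≤ x) : 1 ≤ Real.exp (r * x) :=
  Real.one_le_exp (mul_nonneg hr hx)

lemma div_aux {e β d : ℝ} (he : 0 ≤ e) (hβ : 0 < β) (hd : 0 < d) (h : d / 2 ≤ β) :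
    (e - 1) / β ≤ 2 / d * e := by
  rw [div_le_iff₀ hβ]
  have key : 2 / d * e * (d / 2) = e := by field_simp
  have h2 : 2 / d * e * (d / 2) ≤ 2 / d * e * β :=
    mul_le_mul_of_nonneg_left h (by positivity)
  nlinarith [h2, key]

lemma interval_bound' {h : ℝ → ℝ} (hc : Continuous h) {A β d x : ℝ} (hA : 0 ≤ A) (hd : 0 < d)
    (hβ : d / 2 ≤ β) (hx : 0 ≤ x) (hb : ∀ s, 0 ≤ s → |h s| ≤ A * Real.exp (β * s)) :
    |∫ s in (0:ℝ)..x, h s| ≤ 2 / d * A * Real.exp (β * x) := by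
  have hβpos : 0 < β := lt_of_lt_of_le (half_pos hd) hβ
  have h1 := interval_bound hc hA hβpos.ne' hx hb
  refine h1.trans ?_
  have h2 := div_aux (Real.exp_pos (β * x)).le hβpos hd hβ
  calc A * ((Real.exp (β * x) - 1) / β) ≤ A * (2 / d * Real.exp (β * x)) :=
        mul_le_mul_of_nonneg_left h2 hA
    _ = 2 / d * A * Real.exp (β * x) := by ring

lemma exp_prod_le {p q r c x : ℝ} (hx : 0 ≤ x) (hc : 0 ≤ c) (h : p + q ≤ r) :
    Real.exp (p * x) * (c * Real.exp (q * x)) ≤ c * Real.exp (r * x) := by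
  rw [mul_left_comm, ← Real.exp_add, show p * x + q * x = (p + q) * x from by ring]
  exact mul_le_mul_of_nonneg_left (exp_rate_mono h hx) hc

end OdeAsymAux

open OdeAsymAux

set_option maxHeartbeats 2000000 in
/-- ODE asymptotics for a coupled linear system on the half-line: if `−u'' + m²u + P₁u + P₂v = 0`
and `−v'' + P₃u + P₄v = 0` with continuous potentials `Pⱼ` satisfying
`|Pⱼ(x)| ≤ C e^{−(2m+δ)x}` for `x ≥ 0`, then for some constants `c, d₀, d₁` and `C' > 0`,
`|u(x) − c e^{mx}| ≤ C' e^{−mx}` and `|v(x) − d₀ − d₁x| ≤ C' e^{−mx}` for all `x ≥ 0`. -/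
theorem ode_asymptotics (m : ℝ) (hm : 0 < m) (P₁ P₂ P₃ P₄ : ℝ → ℝ)
    (hP₁ : Continuous P₁) (hP₂ : Continuous P₂) (hP₃ : Continuous P₃) (hP₄ : Continuous P₄)
    (C δ : ℝ) (hC : 0 < C) (hδ : 0 < δ)
    (hbound : ∀ x : ℝ, 0 ≤ x →
      |P₁ x| ≤ C * Real.exp (-((2 * m + δ) * x)) ∧
      |P₂ x| ≤ C * Real.exp (-((2 * m + δ) * x)) ∧
      |P₃ x| ≤ C * Real.exp (-((2 * m + δ) * x)) ∧
      |P₄ x| ≤ C * Real.exp (-((2 * m + δ) * x)))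
    (u v : ℝ → ℝ) (hu : ContDiff ℝ 2 u) (hv : ContDiff ℝ 2 v)
    (hequ : ∀ x : ℝ, -(deriv (deriv u) x) + m ^ 2 * u x + P₁ x * u x + P₂ x * v x = 0)
    (heqv : ∀ x : ℝ, -(deriv (deriv v) x) + P₃ x * u x + P₄ x * v x = 0) :
    ∃ c d₀ d₁ C' : ℝ, 0 < C' ∧ ∀ x : ℝ, 0 ≤ x →
      |u x - c * Real.exp (m * x)| ≤ C' * Real.exp (-(m * x)) ∧
      |v x - d₀ - d₁ * x| ≤ C' * Real.exp (-(m * x)) := by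
  -- differentiability facts
  have hfacts : ∀ w : ℝ → ℝ, ContDiff ℝ 2 w →
      Differentiable ℝ w ∧ Differentiable ℝ (deriv w) := by
    intro w hw
    have h2 : ContDiff ℝ (1 + 1) w := by exact_mod_cast hw
    rw [contDiff_succ_iff_deriv] at h2
    obtain ⟨h1, -, h3⟩ := h2
    rw [contDiff_one_iff_deriv] at h3
    exact ⟨h1, h3.1⟩
  obtain ⟨hu1, hu2⟩ := hfacts u hu
  obtain ⟨hv1, hv2⟩ := hfacts v hv
  have huc : Continuous u := hu1.continuous
  have hu'c : Continuous (deriv u) := hu2.continuous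
  have hvc : Continuous v := hv1.continuous
  have hv'c : Continuous (deriv v) := hv2.continuous
  -- the forcing terms
  set f : ℝ → ℝ := fun x => P₁ x * u x + P₂ x * v x with hf_def
  set g : ℝ → ℝ := fun x => P₃ x * u x + P₄ x * v x with hg_def
  have hfc : Continuous f := (hP₁.mul huc).add (hP₂.mul hvc)
  have hgc : Continuous g := (hP₃.mul huc).add (hP₄.mul hvc)
  have hu'' : ∀ x, deriv (deriv u) x = m ^ 2 * u x + f x := by
    intro x; have := hequ x; simp only [hf_def]; linarith
  have hv'' : ∀ x, deriv (deriv v) x = g x := by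
    intro x; have := heqv x; simp only [hg_def]; linarith
  have hv''c : Continuous (deriv (deriv v)) := by
    rw [show deriv (deriv v) = g from funext hv'']; exact hgc
  -- potentials bounded by C on [0, ∞)
  have hPb : ∀ x : ℝ, 0 ≤ x → |P₁ x| ≤ C ∧ |P₂ x| ≤ C ∧ |P₃ x| ≤ C ∧ |P₄ x| ≤ C := by
    intro x hx
    have he : Real.exp (-((2 * m + δ) * x)) ≤ 1 := by
      rw [Real.exp_le_one_iff]
      have : 0 ≤ (2 * m + δ) * x := mul_nonneg (by linarith) hx
      linarith
    obtain ⟨h1, h2, h3, h4⟩ := hbound x hx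
    have hCe : C * Real.exp (-((2 * m + δ) * x)) ≤ C := by nlinarith [hC.le]
    exact ⟨h1.trans hCe, h2.trans hCe, h3.trans hCe, h4.trans hCe⟩
  -- Step 0 : a priori exponential growth bound via Gronwall
  set K₀ : ℝ := 2 + m ^ 2 + 4 * C with hK₀_def
  have hK₀pos : 0 < K₀ := by positivity
  set E : ℝ → ℝ := fun x => u x ^ 2 + deriv u x ^ 2 + v x ^ 2 + deriv v x ^ 2 with hE_def
  set E' : ℝ → ℝ := fun x => 2 * (u x * deriv u x + deriv u x * deriv (deriv u) x +
      v x * deriv v x + deriv v x * deriv (deriv v) x) with hE'_def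
  have hEd : ∀ t, HasDerivAt E (E' t) t := by
    intro t
    have h1 : HasDerivAt (fun x => u x ^ 2) (2 * u t * deriv u t) t := by
      simpa using ((hu1 t).hasDerivAt.fun_pow 2)
    have h2 : HasDerivAt (fun x => deriv u x ^ 2) (2 * deriv u t * deriv (deriv u) t) t := by
      simpa using ((hu2 t).hasDerivAt.fun_pow 2)
    have h3 : HasDerivAt (fun x => v x ^ 2) (2 * v t * deriv v t) t := by
      simpa using ((hv1 t).hasDerivAt.fun_pow 2)
    have h4 : HasDerivAt (fun x => deriv v x ^ 2) (2 * deriv v t * deriv (deriv v) t) t := by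
      simpa using ((hv2 t).hasDerivAt.fun_pow 2)
    have := ((h1.add h2).add h3).add h4
    exact this.congr_deriv (by simp only [hE'_def]; ring)
  have hEnn : ∀ t, 0 ≤ E t := fun t => by simp only [hE_def]; positivity
  have hEbd : ∀ t, 0 ≤ t → |E' t| ≤ K₀ * E t := by
    intro t ht
    obtain ⟨hb1, hb2, hb3, hb4⟩ := hPb t ht
    set p := u t; set q := deriv u t; set r := v t; set s := deriv v t
    have habsu'' : |deriv (deriv u) t| ≤ m ^ 2 * |p| + C * |p| + C * |r| := by
      rw [hu'' t]
      calc |m ^ 2 * p + f t| ≤ |m ^ 2 * p| + |f t| := abs_add_le _ _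
        _ ≤ m ^ 2 * |p| + (C * |p| + C * |r|) := by
            apply add_le_add
            · rw [abs_mul, abs_of_nonneg (by positivity : (0:ℝ) ≤ m ^ 2)]
            · simp only [hf_def]
              calc |P₁ t * p + P₂ t * r| ≤ |P₁ t * p| + |P₂ t * r| := abs_add_le _ _
                _ ≤ C * |p| + C * |r| := by
                    rw [abs_mul, abs_mul]
                    exact add_le_add (mul_le_mul_of_nonneg_right hb1 (abs_nonneg _))
                      (mul_le_mul_of_nonneg_right hb2 (abs_nonneg _))
        _ = m ^ 2 * |p| + C * |p| + C * |r| := by ring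
    have habsv'' : |deriv (deriv v) t| ≤ C * |p| + C * |r| := by
      rw [hv'' t]
      simp only [hg_def]
      calc |P₃ t * p + P₄ t * r| ≤ |P₃ t * p| + |P₄ t * r| := abs_add_le _ _
        _ ≤ C * |p| + C * |r| := by
            rw [abs_mul, abs_mul]
            exact add_le_add (mul_le_mul_of_nonneg_right hb3 (abs_nonneg _))
              (mul_le_mul_of_nonneg_right hb4 (abs_nonneg _))
    have hE't : |E' t| ≤ 2 * (|p| * |q| + |q| * (m ^ 2 * |p| + C * |p| + C * |r|) +
        |r| * |s| + |s| * (C * |p| + C * |r|)) := by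
      simp only [hE'_def]
      rw [abs_mul, abs_two]
      apply mul_le_mul_of_nonneg_left _ (by norm_num : (0:ℝ) ≤ 2)
      calc |p * q + q * deriv (deriv u) t + r * s + s * deriv (deriv v) t|
          ≤ |p * q| + |q * deriv (deriv u) t| + |r * s| + |s * deriv (deriv v) t| := by
            exact (abs_add_le _ _).trans (add_le_add ((abs_add_le _ _).trans
              (add_le_add ((abs_add_le _ _).trans (add_le_add le_rfl le_rfl)) le_rfl)) le_rfl)
        _ ≤ |p| * |q| + |q| * (m ^ 2 * |p| + C * |p| + C * |r|) +
            |r| * |s| + |s| * (C * |p| + C * |r|) := by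
            rw [abs_mul, abs_mul, abs_mul, abs_mul]
            exact add_le_add (add_le_add (add_le_add le_rfl
              (mul_le_mul_of_nonneg_left habsu'' (abs_nonneg _))) le_rfl)
              (mul_le_mul_of_nonneg_left habsv'' (abs_nonneg _))
    have hEt : E t = |p| ^ 2 + |q| ^ 2 + |r| ^ 2 + |s| ^ 2 := by
      simp only [hE_def, sq_abs]; rfl
    refine hE't.trans ?_
    rw [hEt, hK₀_def]
    nlinarith [sq_nonneg (|p| - |q|), sq_nonneg (|q| - |r|), sq_nonneg (|p| - |r|),
      sq_nonneg (|r| - |s|), sq_nonneg (|s| - |p|), sq_nonneg (|s| - |r|),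
      sq_nonneg (|q| - |s|), abs_nonneg p, abs_nonneg q, abs_nonneg r, abs_nonneg s,
      sq_nonneg m, hC.le, mul_nonneg (mul_nonneg (sq_nonneg m) (abs_nonneg p)) (abs_nonneg q),
      sq_nonneg (m * (|p| - |q|))]
  have hgron : ∀ x, 0 ≤ x → E x ≤ |E 0| * Real.exp (K₀ * x) := by
    intro x hx
    have h := norm_le_gronwallBound_of_norm_deriv_right_le (f := E) (f' := E')
      (δ := |E 0|) (K := K₀) (ε := 0) (a := 0) (b := x)
      (fun t _ => (hEd t).continuousAt.continuousWithinAt)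
      (fun t _ => (hEd t).hasDerivWithinAt)
      le_rfl
      (fun t ht => by
        have := hEbd t ht.1
        rw [Real.norm_eq_abs, Real.norm_eq_abs, abs_of_nonneg (hEnn t), add_zero]
        exact this)
      x ⟨hx, le_rfl⟩
    rw [Real.norm_eq_abs, abs_of_nonneg (hEnn x)] at h
    simpa [gronwallBound_ε0] using h
  set B₀ : ℝ := Real.sqrt |E 0| + 1 with hB₀_def
  have hB₀pos : 0 < B₀ := by positivity
  have hstep0 : ∀ x, 0 ≤ x → |u x| ≤ B₀ * Real.exp (K₀ * x) ∧ |v x| ≤ B₀ * Real.exp (K₀ * x) := by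
    intro x hx
    have hexp1 : 1 ≤ Real.exp (K₀ * x) := one_le_exp_rate hK₀pos.le hx
    have hkey : ∀ w : ℝ, w ^ 2 ≤ E x → |w| ≤ B₀ * Real.exp (K₀ * x) := by
      intro w hw
      have h1 : |w| = Real.sqrt (w ^ 2) := (Real.sqrt_sq_eq_abs w).symm
      have h2 : Real.sqrt (w ^ 2) ≤ Real.sqrt (|E 0| * Real.exp (K₀ * x)) :=
        Real.sqrt_le_sqrt (hw.trans (hgron x hx))
      have h3 : Real.sqrt (|E 0| * Real.exp (K₀ * x)) =
          Real.sqrt |E 0| * Real.sqrt (Real.exp (K₀ * x)) := Real.sqrt_mul (abs_nonneg _) _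
      have h4 : Real.sqrt (Real.exp (K₀ * x)) ≤ Real.exp (K₀ * x) := by
        rw [← Real.exp_half]
        apply Real.exp_le_exp.2
        nlinarith [mul_nonneg hK₀pos.le hx]
      calc |w| = Real.sqrt (w ^ 2) := h1
        _ ≤ Real.sqrt |E 0| * Real.sqrt (Real.exp (K₀ * x)) := by rw [← h3]; exact h2
        _ ≤ Real.sqrt |E 0| * Real.exp (K₀ * x) :=
            mul_le_mul_of_nonneg_left h4 (Real.sqrt_nonneg _)
        _ ≤ B₀ * Real.exp (K₀ * x) := by
            apply mul_le_mul_of_nonneg_right _ (Real.exp_pos _).le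
            rw [hB₀_def]; linarith
    have hEx : E x = u x ^ 2 + deriv u x ^ 2 + v x ^ 2 + deriv v x ^ 2 := rfl
    constructor
    · exact hkey (u x) (by rw [hEx]; linarith [sq_nonneg (deriv u x), sq_nonneg (v x), sq_nonneg (deriv v x)])
    · exact hkey (v x) (by rw [hEx]; linarith [sq_nonneg (deriv u x), sq_nonneg (u x), sq_nonneg (deriv v x)])
  -- first-order reduction identities
  set a0 : ℝ := deriv u 0 + m * u 0 with ha0_def
  set b0 : ℝ := deriv u 0 - m * u 0 with hb0_def
  have ha_id : ∀ x : ℝ, Real.exp (-(m * x)) * (deriv u x + m * u x) =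
      a0 + ∫ s in (0:ℝ)..x, Real.exp (-(m * s)) * f s :=
    fun x => key_identity m u hu1 hu2 f hfc hu'' x
  have hb_id : ∀ x : ℝ, Real.exp (m * x) * (deriv u x - m * u x) =
      b0 + ∫ s in (0:ℝ)..x, Real.exp (m * s) * f s := by
    intro x
    have h := key_identity (-m) u hu1 hu2 f hfc (fun y => by rw [hu'' y]; ring) x
    simp only [neg_mul, neg_neg, ← sub_eq_add_neg] at h
    rw [hb0_def]
    exact h
  have hv'_id : ∀ x : ℝ, deriv v x = deriv v 0 + ∫ s in (0:ℝ)..x, g s := by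
    intro x
    rw [ftc (deriv v) hv2 hv''c x]
    congr 1
    exact intervalIntegral.integral_congr fun s _ => hv'' s
  have hv_id : ∀ x : ℝ, v x = v 0 + ∫ s in (0:ℝ)..x, deriv v s := fun x => ftc v hv1 hv'c x
  have hprod : ∀ x : ℝ, Real.exp (m * x) * Real.exp (-(m * x)) = 1 := by
    intro x; rw [← Real.exp_add]; simp
  have huval : ∀ x : ℝ, u x = (Real.exp (m * x) *
        (a0 + ∫ s in (0:ℝ)..x, Real.exp (-(m * s)) * f s)
      - Real.exp (-(m * x)) *
        (b0 + ∫ s in (0:ℝ)..x, Real.exp (m * s) * f s)) / (2 * m) := by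
    intro x
    rw [← ha_id x, ← hb_id x,
      show Real.exp (m * x) * (Real.exp (-(m * x)) * (deriv u x + m * u x)) -
          Real.exp (-(m * x)) * (Real.exp (m * x) * (deriv u x - m * u x)) =
          (Real.exp (m * x) * Real.exp (-(m * x))) * (2 * m * u x) from by ring,
      hprod x, one_mul]
    field_simp
  -- bound on forcing terms given a growth bound on u, v
  have hfg_bd : ∀ K B : ℝ, 0 ≤ B →
      (∀ x, 0 ≤ x → |u x| ≤ B * Real.exp (K * x) ∧ |v x| ≤ B * Real.exp (K * x)) →
      ∀ s, 0 ≤ s → |f s| ≤ 2 * C * B * Real.exp ((K - (2 * m + δ)) * s) ∧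
        |g s| ≤ 2 * C * B * Real.exp ((K - (2 * m + δ)) * s) := by
    intro K B hB hbd s hs
    obtain ⟨h1, h2, h3, h4⟩ := hbound s hs
    obtain ⟨hU, hV⟩ := hbd s hs
    have hexp : Real.exp (-((2 * m + δ) * s)) * Real.exp (K * s) =
        Real.exp ((K - (2 * m + δ)) * s) := by
      rw [← Real.exp_add]; congr 1; ring
    have haux : ∀ Q : ℝ → ℝ, |Q s| ≤ C * Real.exp (-((2 * m + δ) * s)) → ∀ w : ℝ → ℝ,
        |w s| ≤ B * Real.exp (K * s) →
        |Q s * w s| ≤ C * B * Real.exp ((K - (2 * m + δ)) * s) := by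
      intro Q hQ w hw
      rw [abs_mul, ← hexp]
      calc |Q s| * |w s| ≤ (C * Real.exp (-((2 * m + δ) * s))) * (B * Real.exp (K * s)) :=
            mul_le_mul hQ hw (abs_nonneg _) (by positivity)
        _ = C * B * (Real.exp (-((2 * m + δ) * s)) * Real.exp (K * s)) := by ring
    constructor
    · simp only [hf_def]
      calc |P₁ s * u s + P₂ s * v s| ≤ |P₁ s * u s| + |P₂ s * v s| := abs_add_le _ _
        _ ≤ C * B * Real.exp ((K - (2 * m + δ)) * s) +
            C * B * Real.exp ((K - (2 * m + δ)) * s) := by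
            rw [hexp] at *
            exact add_le_add (haux P₁ h1 u hU) (haux P₂ h2 v hV)
        _ = 2 * C * B * Real.exp ((K - (2 * m + δ)) * s) := by ring
    · simp only [hg_def]
      calc |P₃ s * u s + P₄ s * v s| ≤ |P₃ s * u s| + |P₄ s * v s| := abs_add_le _ _
        _ ≤ C * B * Real.exp ((K - (2 * m + δ)) * s) +
            C * B * Real.exp ((K - (2 * m + δ)) * s) :=
            add_le_add (haux P₃ h3 u hU) (haux P₄ h4 v hV)
        _ = 2 * C * B * Real.exp ((K - (2 * m + δ)) * s) := by ring
  have h2m : (0:ℝ) < 2 * m := by linarith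
  -- bootstrap step: lower the growth rate by δ (down to m + δ/2)
  have boot : ∀ K B : ℝ, m + δ / 2 ≤ K → 0 < B →
      (∀ x, 0 ≤ x → |u x| ≤ B * Real.exp (K * x) ∧ |v x| ≤ B * Real.exp (K * x)) →
      ∃ B', 0 < B' ∧ ∀ x, 0 ≤ x →
        |u x| ≤ B' * Real.exp (max (K - δ) (m + δ / 2) * x) ∧
        |v x| ≤ B' * Real.exp (max (K - δ) (m + δ / 2) * x) := by
    intro K B hK hB hbd
    have hfg := hfg_bd K B hB.le hbd
    set α : ℝ := K - (2 * m + δ) with hα_def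
    set A : ℝ := 2 * C * B with hA_def
    have hApos : 0 < A := by positivity
    set r' : ℝ := max (K - δ) (m + δ / 2) with hr'_def
    have hαr : α ≤ r' := le_trans (by rw [hα_def]; linarith) (le_max_left _ _)
    have hmr : m + δ / 2 ≤ r' := le_max_right _ _
    have hr'm : m ≤ r' := by linarith
    set β₁ : ℝ := max (α - m) (δ / 2) with hβ₁_def
    set β₂ : ℝ := max (α + m) (δ / 2) with hβ₂_def
    set β₃ : ℝ := max α (δ / 2) with hβ₃_def
    have hβ₁r : m + β₁ ≤ r' := by
      rw [hβ₁_def]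
      have := max_le (show α - m ≤ r' - m by linarith) (show δ / 2 ≤ r' - m by linarith)
      linarith
    have hβ₂r : -m + β₂ ≤ r' := by
      rw [hβ₂_def]
      have := max_le (show α + m ≤ r' + m by linarith) (show δ / 2 ≤ r' + m by linarith)
      linarith
    have hβ₃r : β₃ ≤ r' := by
      rw [hβ₃_def]
      exact max_le hαr (by linarith)
    -- bound the three integrands
    have hb1 : ∀ s, 0 ≤ s → |Real.exp (-(m * s)) * f s| ≤ A * Real.exp (β₁ * s) := by
      intro s hs
      rw [abs_mul, abs_of_nonneg (Real.exp_pos _).le]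
      have := mul_le_mul_of_nonneg_left (hfg s hs).1 (Real.exp_pos (-(m * s))).le
      refine this.trans ?_
      rw [show Real.exp (-(m * s)) * (A * Real.exp (α * s)) =
          A * (Real.exp (-(m * s)) * Real.exp (α * s)) from by ring,
        ← Real.exp_add, show -(m * s) + α * s = (α - m) * s from by ring]
      exact mul_le_mul_of_nonneg_left (exp_rate_mono (le_max_left _ _) hs) hApos.le
    have hb2 : ∀ s, 0 ≤ s → |Real.exp (m * s) * f s| ≤ A * Real.exp (β₂ * s) := by
      intro s hs
      rw [abs_mul, abs_of_nonneg (Real.exp_pos _).le]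
      have := mul_le_mul_of_nonneg_left (hfg s hs).1 (Real.exp_pos (m * s)).le
      refine this.trans ?_
      rw [show Real.exp (m * s) * (A * Real.exp (α * s)) =
          A * (Real.exp (m * s) * Real.exp (α * s)) from by ring,
        ← Real.exp_add, show m * s + α * s = (α + m) * s from by ring]
      exact mul_le_mul_of_nonneg_left (exp_rate_mono (le_max_left _ _) hs) hApos.le
    have hb3 : ∀ s, 0 ≤ s → |g s| ≤ A * Real.exp (β₃ * s) := by
      intro s hs
      refine (hfg s hs).2.trans ?_
      exact mul_le_mul_of_nonneg_left (exp_rate_mono (le_max_left _ _) hs) hApos.le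
    have hδ2β₁ : δ / 2 ≤ β₁ := le_max_right _ _
    have hδ2β₂ : δ / 2 ≤ β₂ := le_max_right _ _
    have hδ2β₃ : δ / 2 ≤ β₃ := le_max_right _ _
    have hI1 : ∀ x, 0 ≤ x → |∫ s in (0:ℝ)..x, Real.exp (-(m * s)) * f s| ≤
        2 / δ * A * Real.exp (β₁ * x) := fun x hx =>
      interval_bound' ((Real.continuous_exp.comp ((continuous_const.mul continuous_id).neg)).mul hfc) hApos.le hδ hδ2β₁ hx hb1
    have hI2 : ∀ x, 0 ≤ x → |∫ s in (0:ℝ)..x, Real.exp (m * s) * f s| ≤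
        2 / δ * A * Real.exp (β₂ * x) := fun x hx =>
      interval_bound' ((Real.continuous_exp.comp (continuous_const.mul continuous_id)).mul hfc) hApos.le hδ hδ2β₂ hx hb2
    have hI3 : ∀ x, 0 ≤ x → |∫ s in (0:ℝ)..x, g s| ≤
        2 / δ * A * Real.exp (β₃ * x) := fun x hx =>
      interval_bound' hgc hApos.le hδ hδ2β₃ hx hb3
    -- bound u
    have hub : ∀ x, 0 ≤ x → |u x| ≤
        ((|a0| + |b0| + 4 / δ * A) / (2 * m)) * Real.exp (r' * x) := by
      intro x hx
      rw [huval x, abs_div, abs_of_pos h2m, div_mul_eq_mul_div, div_le_div_iff_of_pos_right h2m]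
      have t1 : Real.exp (m * x) * |a0| ≤ |a0| * Real.exp (r' * x) := by
        rw [mul_comm]
        exact mul_le_mul_of_nonneg_left (exp_rate_mono hr'm hx) (abs_nonneg _)
      have t2 : Real.exp (m * x) * (2 / δ * A * Real.exp (β₁ * x)) ≤
          2 / δ * A * Real.exp (r' * x) := exp_prod_le hx (by positivity) hβ₁r
      have t3 : Real.exp (-(m * x)) * |b0| ≤ |b0| * Real.exp (r' * x) := by
        rw [mul_comm, show -(m * x) = -m * x from by ring]
        exact mul_le_mul_of_nonneg_left (exp_rate_mono (by linarith) hx) (abs_nonneg _)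
      have t4 : Real.exp (-(m * x)) * (2 / δ * A * Real.exp (β₂ * x)) ≤
          2 / δ * A * Real.exp (r' * x) := by
        rw [show -(m * x) = -m * x from by ring]
        exact exp_prod_le hx (by positivity) hβ₂r
      have tri : |Real.exp (m * x) * (a0 + ∫ s in (0:ℝ)..x, Real.exp (-(m * s)) * f s)
          - Real.exp (-(m * x)) * (b0 + ∫ s in (0:ℝ)..x, Real.exp (m * s) * f s)| ≤
          Real.exp (m * x) * (|a0| + |∫ s in (0:ℝ)..x, Real.exp (-(m * s)) * f s|)
          + Real.exp (-(m * x)) * (|b0| + |∫ s in (0:ℝ)..x, Real.exp (m * s) * f s|) := by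
        rw [sub_eq_add_neg]
        refine (abs_add_le _ _).trans ?_
        rw [abs_neg, abs_mul, abs_mul, abs_of_nonneg (Real.exp_pos _).le,
          abs_of_nonneg (Real.exp_pos _).le]
        exact add_le_add
          (mul_le_mul_of_nonneg_left (abs_add_le _ _) (Real.exp_pos _).le)
          (mul_le_mul_of_nonneg_left (abs_add_le _ _) (Real.exp_pos _).le)
      refine tri.trans ?_
      have e1 : Real.exp (m * x) * (|a0| + |∫ s in (0:ℝ)..x, Real.exp (-(m * s)) * f s|) ≤
          Real.exp (m * x) * |a0| + Real.exp (m * x) * (2 / δ * A * Real.exp (β₁ * x)) := by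
        rw [mul_add]
        exact add_le_add le_rfl (mul_le_mul_of_nonneg_left (hI1 x hx) (Real.exp_pos _).le)
      have e2 : Real.exp (-(m * x)) * (|b0| + |∫ s in (0:ℝ)..x, Real.exp (m * s) * f s|) ≤
          Real.exp (-(m * x)) * |b0| + Real.exp (-(m * x)) * (2 / δ * A * Real.exp (β₂ * x)) := by
        rw [mul_add]
        exact add_le_add le_rfl (mul_le_mul_of_nonneg_left (hI2 x hx) (Real.exp_pos _).le)
      have final : |a0| * Real.exp (r' * x) + 2 / δ * A * Real.exp (r' * x)
          + (|b0| * Real.exp (r' * x) + 2 / δ * A * Real.exp (r' * x))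
          = (|a0| + |b0| + 4 / δ * A) * Real.exp (r' * x) := by ring
      linarith [e1, e2, t1, t2, t3, t4]
    -- bound v
    have hv'b : ∀ s, 0 ≤ s → |deriv v s| ≤
        (|deriv v 0| + 2 / δ * A) * Real.exp (β₃ * s) := by
      intro s hs
      rw [hv'_id s]
      have hexp1 : (1:ℝ) ≤ Real.exp (β₃ * s) :=
        one_le_exp_rate (by linarith [half_pos hδ, hδ2β₃]) hs
      calc |deriv v 0 + ∫ t in (0:ℝ)..s, g t| ≤ |deriv v 0| + |∫ t in (0:ℝ)..s, g t| :=
            abs_add_le _ _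
        _ ≤ |deriv v 0| * Real.exp (β₃ * s) + 2 / δ * A * Real.exp (β₃ * s) := by
            have := hI3 s hs
            nlinarith [abs_nonneg (deriv v 0)]
        _ = (|deriv v 0| + 2 / δ * A) * Real.exp (β₃ * s) := by ring
    have hvb : ∀ x, 0 ≤ x → |v x| ≤
        (|v 0| + 2 / δ * (|deriv v 0| + 2 / δ * A)) * Real.exp (r' * x) := by
      intro x hx
      rw [hv_id x]
      have hI4 := interval_bound' hv'c (by positivity) hδ hδ2β₃ hx hv'b
      have hexp1 : (1:ℝ) ≤ Real.exp (r' * x) :=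
        one_le_exp_rate (by linarith [half_pos hδ]) hx
      have hmono : Real.exp (β₃ * x) ≤ Real.exp (r' * x) := exp_rate_mono hβ₃r hx
      calc |v 0 + ∫ s in (0:ℝ)..x, deriv v s| ≤ |v 0| + |∫ s in (0:ℝ)..x, deriv v s| :=
            abs_add_le _ _
        _ ≤ |v 0| * Real.exp (r' * x) + 2 / δ * (|deriv v 0| + 2 / δ * A) * Real.exp (r' * x) := by
            have h5 : 2 / δ * (|deriv v 0| + 2 / δ * A) * Real.exp (β₃ * x) ≤
                2 / δ * (|deriv v 0| + 2 / δ * A) * Real.exp (r' * x) :=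
              mul_le_mul_of_nonneg_left hmono (by positivity)
            nlinarith [abs_nonneg (v 0), hI4]
        _ = (|v 0| + 2 / δ * (|deriv v 0| + 2 / δ * A)) * Real.exp (r' * x) := by ring
    refine ⟨(|a0| + |b0| + 4 / δ * A) / (2 * m) +
      (|v 0| + 2 / δ * (|deriv v 0| + 2 / δ * A)) + 1, by positivity, fun x hx => ?_⟩
    have hexppos := (Real.exp_pos (r' * x)).le
    constructor
    · refine (hub x hx).trans (mul_le_mul_of_nonneg_right ?_ hexppos)
      have h1 : 0 ≤ |v 0| + 2 / δ * (|deriv v 0| + 2 / δ * A) := by positivity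
      linarith
    · refine (hvb x hx).trans (mul_le_mul_of_nonneg_right ?_ hexppos)
      have h1 : 0 ≤ (|a0| + |b0| + 4 / δ * A) / (2 * m) := by positivity
      linarith
  -- iterate the bootstrap
  set Ks : ℝ := max K₀ (m + δ / 2) with hKs_def
  have hKs1 : m + δ / 2 ≤ Ks := le_max_right _ _
  have iter : ∀ n : ℕ, ∃ B, 0 < B ∧ ∀ x, 0 ≤ x →
      |u x| ≤ B * Real.exp (max (Ks - n * δ) (m + δ / 2) * x) ∧
      |v x| ≤ B * Real.exp (max (Ks - n * δ) (m + δ / 2) * x) := by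
    intro n
    induction n with
    | zero =>
      refine ⟨B₀, hB₀pos, fun x hx => ?_⟩
      have hmax : max (Ks - (0:ℕ) * δ) (m + δ / 2) = Ks := by
        rw [Nat.cast_zero, zero_mul, sub_zero]
        exact max_eq_left hKs1
      rw [hmax]
      have hmono : Real.exp (K₀ * x) ≤ Real.exp (Ks * x) :=
        exp_rate_mono (le_max_left _ _) hx
      obtain ⟨h1, h2⟩ := hstep0 x hx
      exact ⟨h1.trans (mul_le_mul_of_nonneg_left hmono hB₀pos.le),
        h2.trans (mul_le_mul_of_nonneg_left hmono hB₀pos.le)⟩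
    | succ n ih =>
      obtain ⟨B, hB, hbd⟩ := ih
      obtain ⟨B', hB', hbd'⟩ := boot (max (Ks - n * δ) (m + δ / 2)) B (le_max_right _ _) hB hbd
      refine ⟨B', hB', fun x hx => ?_⟩
      have hrate : max (max (Ks - n * δ) (m + δ / 2) - δ) (m + δ / 2) ≤
          max (Ks - (n + 1 : ℕ) * δ) (m + δ / 2) := by
        apply max_le _ (le_max_right _ _)
        rcases le_total (Ks - n * δ) (m + δ / 2) with h | h
        · rw [max_eq_right h]
          have := le_max_right (Ks - (n + 1 : ℕ) * δ) (m + δ / 2)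
          linarith
        · rw [max_eq_left h]
          have := le_max_left (Ks - (n + 1 : ℕ) * δ) (m + δ / 2)
          push_cast at this ⊢
          linarith
      obtain ⟨h1, h2⟩ := hbd' x hx
      have hmono := exp_rate_mono hrate hx
      exact ⟨h1.trans (mul_le_mul_of_nonneg_left hmono hB'.le),
        h2.trans (mul_le_mul_of_nonneg_left hmono hB'.le)⟩
  obtain ⟨n, hn⟩ := exists_nat_gt ((Ks - (m + δ / 2)) / δ)
  obtain ⟨Bb, hBb, hBbd⟩ := iter n
  have hcap : max (Ks - n * δ) (m + δ / 2) = m + δ / 2 := by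
    apply max_eq_right
    rw [div_lt_iff₀ hδ] at hn
    nlinarith
  rw [hcap] at hBbd
  -- final step: rate is now m + δ/2
  set μ : ℝ := m + δ / 2 with hμ_def
  have hμpos : 0 < μ := by rw [hμ_def]; linarith
  have hfg2 := hfg_bd μ Bb hBb.le hBbd
  set A : ℝ := 2 * C * Bb with hA_def
  have hApos : 0 < A := by positivity
  have hμeq : ∀ s : ℝ, (μ - (2 * m + δ)) * s = -(μ * s) := by
    intro s; rw [hμ_def]; ring
  have hf2 : ∀ s, 0 ≤ s → |f s| ≤ A * Real.exp (-(μ * s)) := by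
    intro s hs
    have := (hfg2 s hs).1
    rwa [hμeq s] at this
  have hg2 : ∀ s, 0 ≤ s → |g s| ≤ A * Real.exp (-(μ * s)) := by
    intro s hs
    have := (hfg2 s hs).2
    rwa [hμeq s] at this
  have hmμpos : 0 < m + μ := by linarith
  -- u part
  have hF₁c : Continuous fun s => Real.exp (-(m * s)) * f s :=
    (Real.continuous_exp.comp ((continuous_const.mul continuous_id).neg)).mul hfc
  have hF₁b : ∀ s, 0 ≤ s → |Real.exp (-(m * s)) * f s| ≤ A * Real.exp (-((m + μ) * s)) := by
    intro s hs
    rw [abs_mul, abs_of_nonneg (Real.exp_pos _).le]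
    calc Real.exp (-(m * s)) * |f s| ≤ Real.exp (-(m * s)) * (A * Real.exp (-(μ * s))) :=
          mul_le_mul_of_nonneg_left (hf2 s hs) (Real.exp_pos _).le
      _ = A * (Real.exp (-(m * s)) * Real.exp (-(μ * s))) := by ring
      _ = A * Real.exp (-((m + μ) * s)) := by rw [← Real.exp_add]; congr 1; ring
  set I : ℝ := ∫ s in Ioi (0:ℝ), Real.exp (-(m * s)) * f s with hI_def
  set c : ℝ := (a0 + I) / (2 * m) with hc_def
  have hsplit1 : ∀ x, 0 ≤ x → (∫ s in (0:ℝ)..x, Real.exp (-(m * s)) * f s) =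
      I - ∫ s in Ioi x, Real.exp (-(m * s)) * f s := fun x hx =>
    Ioi_split hF₁c hmμpos hF₁b hx
  have htail1 : ∀ x, 0 ≤ x → |∫ s in Ioi x, Real.exp (-(m * s)) * f s| ≤
      A * Real.exp (-((m + μ) * x)) / (m + μ) := fun x hx =>
    tail_bound hF₁c hmμpos hF₁b hx
  -- bound on b-part
  have hbB : ∀ x, 0 ≤ x → |b0 + ∫ s in (0:ℝ)..x, Real.exp (m * s) * f s| ≤
      |b0| + 2 / δ * A := by
    intro x hx
    have hbnd : ∀ s, 0 ≤ s → |Real.exp (m * s) * f s| ≤ A * Real.exp (-(δ / 2) * s) := by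
      intro s hs
      rw [abs_mul, abs_of_nonneg (Real.exp_pos _).le]
      calc Real.exp (m * s) * |f s| ≤ Real.exp (m * s) * (A * Real.exp (-(μ * s))) :=
            mul_le_mul_of_nonneg_left (hf2 s hs) (Real.exp_pos _).le
        _ = A * (Real.exp (m * s) * Real.exp (-(μ * s))) := by ring
        _ = A * Real.exp (-(δ / 2) * s) := by
            rw [← Real.exp_add]; congr 1; rw [hμ_def]; ring
    have hIb := interval_bound ((Real.continuous_exp.comp
      (continuous_const.mul continuous_id)).mul hfc) hApos.le
      (show -(δ / 2) ≠ 0 by intro h; rw [neg_eq_zero] at h; linarith) hx hbnd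
    have hfrac : (Real.exp (-(δ / 2) * x) - 1) / -(δ / 2) ≤ 2 / δ := by
      rw [div_le_iff_of_neg (by linarith : -(δ / 2) < 0)]
      have h1 : 2 / δ * -(δ / 2) = -1 := by field_simp
      rw [h1]
      linarith [(Real.exp_pos (-(δ / 2) * x)).le]
    calc |b0 + ∫ s in (0:ℝ)..x, Real.exp (m * s) * f s| ≤
          |b0| + |∫ s in (0:ℝ)..x, Real.exp (m * s) * f s| := abs_add_le _ _
      _ ≤ |b0| + 2 / δ * A := by
          have h6 : |∫ s in (0:ℝ)..x, Real.exp (m * s) * f s| ≤ 2 / δ * A := by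
            refine hIb.trans ?_
            calc A * ((Real.exp (-(δ / 2) * x) - 1) / -(δ / 2)) ≤ A * (2 / δ) :=
                  mul_le_mul_of_nonneg_left hfrac hApos.le
              _ = 2 / δ * A := by ring
          linarith
  -- the u asymptotic bound
  set C'u : ℝ := (A / (m + μ) + (|b0| + 2 / δ * A)) / (2 * m) with hC'u_def
  have huerr : ∀ x, 0 ≤ x → |u x - c * Real.exp (m * x)| ≤ C'u * Real.exp (-(m * x)) := by
    intro x hx
    have hkey : u x - c * Real.exp (m * x) =
        (-(Real.exp (m * x) * ∫ s in Ioi x, Real.exp (-(m * s)) * f s)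
          - Real.exp (-(m * x)) * (b0 + ∫ s in (0:ℝ)..x, Real.exp (m * s) * f s)) / (2 * m) := by
      rw [huval x, hsplit1 x hx, hc_def]
      field_simp
      ring
    rw [hkey, abs_div, abs_of_pos h2m, div_le_iff₀ h2m]
    have ht1 : |Real.exp (m * x) * ∫ s in Ioi x, Real.exp (-(m * s)) * f s| ≤
        (A / (m + μ)) * Real.exp (-(m * x)) := by
      rw [abs_mul, abs_of_nonneg (Real.exp_pos _).le]
      calc Real.exp (m * x) * |∫ s in Ioi x, Real.exp (-(m * s)) * f s| ≤
            Real.exp (m * x) * (A * Real.exp (-((m + μ) * x)) / (m + μ)) :=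
            mul_le_mul_of_nonneg_left (htail1 x hx) (Real.exp_pos _).le
        _ = (A / (m + μ)) * (Real.exp (m * x) * Real.exp (-((m + μ) * x))) := by ring
        _ = (A / (m + μ)) * Real.exp (-(μ * x)) := by
            rw [← Real.exp_add]; congr 2; ring
        _ ≤ (A / (m + μ)) * Real.exp (-(m * x)) := by
            apply mul_le_mul_of_nonneg_left _ (by positivity)
            rw [show -(μ * x) = -μ * x from by ring, show -(m * x) = -m * x from by ring]
            exact exp_rate_mono (by rw [hμ_def]; linarith) hx
    have ht2 : |Real.exp (-(m * x)) * (b0 + ∫ s in (0:ℝ)..x, Real.exp (m * s) * f s)| ≤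
        (|b0| + 2 / δ * A) * Real.exp (-(m * x)) := by
      rw [abs_mul, abs_of_nonneg (Real.exp_pos _).le, mul_comm]
      exact mul_le_mul_of_nonneg_right (hbB x hx) (Real.exp_pos _).le
    calc |(-(Real.exp (m * x) * ∫ s in Ioi x, Real.exp (-(m * s)) * f s)
          - Real.exp (-(m * x)) * (b0 + ∫ s in (0:ℝ)..x, Real.exp (m * s) * f s))| ≤
          |Real.exp (m * x) * ∫ s in Ioi x, Real.exp (-(m * s)) * f s|
          + |Real.exp (-(m * x)) * (b0 + ∫ s in (0:ℝ)..x, Real.exp (m * s) * f s)| := by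
          rw [sub_eq_add_neg]
          refine (abs_add_le _ _).trans ?_
          rw [abs_neg, abs_neg]
      _ ≤ (A / (m + μ)) * Real.exp (-(m * x)) + (|b0| + 2 / δ * A) * Real.exp (-(m * x)) :=
          add_le_add ht1 ht2
      _ = C'u * Real.exp (-(m * x)) * (2 * m) := by rw [hC'u_def]; field_simp
  -- v part
  set J : ℝ := ∫ s in Ioi (0:ℝ), g s with hJ_def
  set d₁ : ℝ := deriv v 0 + J with hd₁_def
  have hv'err : ∀ x, 0 ≤ x → |deriv v x - d₁| ≤ A / μ * Real.exp (-(μ * x)) := by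
    intro x hx
    rw [hv'_id x, Ioi_split hgc hμpos hg2 hx, hd₁_def,
      show deriv v 0 + (J - ∫ s in Ioi x, g s) - (deriv v 0 + J) = -(∫ s in Ioi x, g s) from by
        ring, abs_neg]
    have := tail_bound hgc hμpos hg2 hx
    calc |∫ s in Ioi x, g s| ≤ A * Real.exp (-(μ * x)) / μ := this
      _ = A / μ * Real.exp (-(μ * x)) := by ring
  have hh2c : Continuous fun s => deriv v s - d₁ := hv'c.sub continuous_const
  have hh2b : ∀ s, 0 ≤ s → |deriv v s - d₁| ≤ A / μ * Real.exp (-(μ * s)) := hv'err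
  set J₂ : ℝ := ∫ s in Ioi (0:ℝ), (deriv v s - d₁) with hJ₂_def
  set d₀ : ℝ := v 0 + J₂ with hd₀_def
  set C'v : ℝ := A / μ / μ with hC'v_def
  have hverr : ∀ x, 0 ≤ x → |v x - d₀ - d₁ * x| ≤ C'v * Real.exp (-(m * x)) := by
    intro x hx
    have hintg : (∫ s in (0:ℝ)..x, deriv v s) = (∫ s in (0:ℝ)..x, (deriv v s - d₁)) + d₁ * x := by
      have h1 : (∫ s in (0:ℝ)..x, deriv v s) =
          ∫ s in (0:ℝ)..x, ((deriv v s - d₁) + d₁) := by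
        apply intervalIntegral.integral_congr
        intro s _; ring
      rw [h1, intervalIntegral.integral_add (hh2c.intervalIntegrable 0 x)
        (intervalIntegrable_const), intervalIntegral.integral_const, smul_eq_mul]
      ring
    have hkey : v x - d₀ - d₁ * x = -(∫ s in Ioi x, (deriv v s - d₁)) := by
      rw [hv_id x, hintg, hd₀_def,
        Ioi_split hh2c hμpos hh2b hx]
      ring
    rw [hkey, abs_neg]
    have := tail_bound hh2c hμpos hh2b hx
    calc |∫ s in Ioi x, (deriv v s - d₁)| ≤ A / μ * Real.exp (-(μ * x)) / μ := this
      _ = C'v * Real.exp (-(μ * x)) := by rw [hC'v_def]; ring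
      _ ≤ C'v * Real.exp (-(m * x)) := by
          apply mul_le_mul_of_nonneg_left _ (by positivity)
          rw [show -(μ * x) = -μ * x from by ring, show -(m * x) = -m * x from by ring]
          exact exp_rate_mono (by rw [hμ_def]; linarith) hx
  -- conclusion
  refine ⟨c, d₀, d₁, C'u + C'v + 1, by positivity, fun x hx => ?_⟩
  have hC'unn : 0 ≤ C'u := by rw [hC'u_def]; positivity
  have hC'vnn : 0 ≤ C'v := by rw [hC'v_def]; positivity
  have hexppos := (Real.exp_pos (-(m * x))).le
  constructor
  · refine (huerr x hx).trans ?_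
    apply mul_le_mul_of_nonneg_right _ hexppos
    linarith
  · refine (hverr x hx).trans ?_
    apply mul_le_mul_of_nonneg_right _ hexppos
    linarith
end
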